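/- For the generalized Hermite polynomials H_n defined by H_0 = 1 and H_{n+1}(x) = x H_n(x) - ∂_x H_n(x) in R_{0,m}, the value at x = 0 satisfies H_{2n}(0) = c_n(n) = Π_{l=1}^n (m + 2(n-l)) = m(m+2)···(m+2(n-1)) and H_{2n+1}(0) = 0. -/

import Mathlib

open scoped BigOperators

/-- The Dirac operator `∂_x f = ∑_j e_j ∂_{x_j} f`. -/
noncomputable def diracOp {m : ℕ} {A : Type*} [NormedRing A] [NormedAlgebra ℝ A]
    (e : Fin m → A) (f : (Fin m → ℝ) → A) (x : Fin m → ℝ) : A :=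
  ∑ j : Fin m, e j * fderiv ℝ f x (Pi.single j 1)

/-- Generalized (Clifford-)Hermite polynomials:
`H 0 = 1`, `H (n+1) x = x · H n x - ∂_x (H n) x`, where `x = ∑ x j • e j`. -/
noncomputable def cliffordHermite {m : ℕ} {A : Type*} [NormedRing A] [NormedAlgebra ℝ A]
    (e : Fin m → A) : ℕ → (Fin m → ℝ) → A
  | 0 => fun _ => 1
  | n + 1 => fun x =>
      (∑ j, x j • e j) * cliffordHermite e n x - diracOp e (cliffordHermite e n) x

/-- The constants `c n ν = ∏_{l=1}^ν (m + 2(n-l))`, with `c n 0 = 1`. -/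
noncomputable def hermiteC (m : ℕ) (n ν : ℕ) : ℝ :=
  ∏ l ∈ Finset.Icc 1 ν, ((m : ℝ) + 2 * ((n : ℝ) - (l : ℝ)))

open Polynomial

noncomputable def Ppoly (μ : ℝ) : ℕ → Polynomial ℝ
  | 0 => 1
  | n + 1 =>
      (C μ - X) * (Ppoly μ n - 2 * derivative (Ppoly μ n))
        + 2 * X * derivative (Ppoly μ n - 2 * derivative (Ppoly μ n))

noncomputable def Qpoly (μ : ℝ) (n : ℕ) : Polynomial ℝ :=
  Ppoly μ n - 2 * derivative (Ppoly μ n)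

lemma Ppoly_succ (μ : ℝ) (n : ℕ) :
    Ppoly μ (n + 1) = (C μ - X) * Qpoly μ n + 2 * X * derivative (Qpoly μ n) := rfl

lemma Qpoly_coeff (μ : ℝ) (n k : ℕ) :
    (Qpoly μ n).coeff k = (Ppoly μ n).coeff k - 2 * (k + 1) * (Ppoly μ n).coeff (k + 1) := by
  simp [Qpoly, Polynomial.coeff_derivative]
  ring

lemma Ppoly_coeff (μ : ℝ) : ∀ n j, (Ppoly μ n).coeff j
    = (-1) ^ j * (n.choose j) * ∏ l ∈ Finset.Ico j n, (μ + 2 * l) := by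
  intro n
  induction n with
  | zero =>
    intro j
    match j with
    | 0 => simp [Ppoly, Polynomial.coeff_one]
    | j + 1 => simp [Ppoly, Polynomial.coeff_one]
  | succ n IH =>
    intro j
    have hco : ∀ k, (Ppoly μ (n+1)).coeff (k+1) =
        μ * ((Ppoly μ n).coeff (k+1) - 2*(k+2)*(Ppoly μ n).coeff (k+2))
          - ((Ppoly μ n).coeff k - 2*(k+1)*(Ppoly μ n).coeff (k+1))
          + 2 * ((k+1) * (((Ppoly μ n).coeff (k+1) - 2*(k+2)*(Ppoly μ n).coeff (k+2)))) := by
      intro k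
      rw [Ppoly_succ]
      rw [Polynomial.coeff_add, sub_mul, Polynomial.coeff_sub,
        Polynomial.coeff_C_mul]
      rw [mul_assoc, Polynomial.coeff_ofNat_mul, Polynomial.coeff_X_mul, Polynomial.coeff_X_mul]
      rw [Polynomial.coeff_derivative, Qpoly_coeff, Qpoly_coeff]
      push_cast
      ring
    have hco0 : (Ppoly μ (n+1)).coeff 0
        = μ * ((Ppoly μ n).coeff 0 - 2 * 1 * (Ppoly μ n).coeff 1) := by
      rw [Ppoly_succ]
      rw [Polynomial.coeff_add, sub_mul, Polynomial.coeff_sub,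
        Polynomial.coeff_C_mul]
      rw [mul_assoc, Polynomial.mul_coeff_zero, Polynomial.mul_coeff_zero]
      simp [Qpoly_coeff]
    match j with
    | 0 =>
      rw [hco0, IH 0, IH 1]
      rcases Nat.eq_zero_or_pos n with hn | hn
      · subst hn; simp
      · rw [Finset.prod_Ico_succ_top (Nat.zero_le n)]
        rw [Finset.prod_eq_prod_Ico_succ_bot hn]
        simp only [Nat.choose_zero_right, Nat.choose_one_right, pow_zero, pow_one]
        push_cast
        ring
    | k + 1 =>
      rw [hco k, IH k, IH (k+1), IH (k+2)]
      rcases Nat.lt_trichotomy (k+1) n with hlt | heq | hgt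
      · -- k + 1 < n
        have hIk : ∏ l ∈ Finset.Ico k n, (μ + 2*l)
            = (μ + 2*k) * ((μ + 2*(k+1)) * ∏ l ∈ Finset.Ico (k+2) n, (μ + 2*l)) := by
          rw [Finset.prod_eq_prod_Ico_succ_bot (by omega : k < n),
            Finset.prod_eq_prod_Ico_succ_bot (by omega : k + 1 < n)]
          push_cast; ring
        have hIk1 : ∏ l ∈ Finset.Ico (k+1) n, (μ + 2*l)
            = (μ + 2*(k+1)) * ∏ l ∈ Finset.Ico (k+2) n, (μ + 2*l) := by
          rw [Finset.prod_eq_prod_Ico_succ_bot (by omega : k + 1 < n)]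
          push_cast; ring
        have hIk1' : ∏ l ∈ Finset.Ico (k+1) (n+1), (μ + 2*l)
            = ((μ + 2*(k+1)) * ∏ l ∈ Finset.Ico (k+2) n, (μ + 2*l)) * (μ + 2*n) := by
          rw [Finset.prod_Ico_succ_top (by omega : k + 1 ≤ n), hIk1]
        have h1 : ((n+1).choose (k+1) : ℝ) = n.choose k + n.choose (k+1) := by
          rw [Nat.choose_succ_succ]; push_cast; ring
        have h2' : (n.choose (k+1) : ℝ) * (k+1) = n.choose k * ((n:ℝ) - k) := by
          have h := congrArg (Nat.cast : ℕ → ℝ) (Nat.choose_succ_right_eq n k)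
          push_cast [Nat.cast_sub (by omega : k ≤ n)] at h
          linarith [h]
        have h3' : (n.choose (k+2) : ℝ) * (k+2) = n.choose (k+1) * ((n:ℝ) - (k+1)) := by
          have h := congrArg (Nat.cast : ℕ → ℝ) (Nat.choose_succ_right_eq n (k+1))
          push_cast [Nat.cast_sub (by omega : k + 1 ≤ n)] at h
          linarith [h]
        have hk1 : (k:ℝ) + 1 ≠ 0 := by positivity
        have hk2 : (k:ℝ) + 2 ≠ 0 := by positivity
        have h2 : (n.choose (k+1) : ℝ) = n.choose k * ((n:ℝ) - k) / (k+1) := by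
          field_simp; linarith [h2']
        have h3 : (n.choose (k+2) : ℝ) = n.choose (k+1) * ((n:ℝ) - (k+1)) / (k+2) := by
          field_simp; linarith [h3']
        rw [hIk, hIk1, hIk1', h1, h3, h2]
        field_simp
        ring
      · -- k + 1 = n
        subst heq
        simp only [Nat.choose_succ_self_right, Nat.choose_self,
          Nat.choose_eq_zero_of_lt (by omega : k + 1 < k + 2),
          Finset.Ico_self, Finset.prod_empty,
          show Finset.Ico (k+2) (k+1) = ∅ from Finset.Ico_eq_empty (by omega),
          show Finset.Ico k (k+1) = {k} from Nat.Ico_succ_singleton k,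
          show Finset.Ico (k+1) (k+1+1) = {k+1} from Nat.Ico_succ_singleton (k+1),
          Finset.prod_singleton]
        push_cast
        ring
      · -- n < k + 1
        rcases eq_or_lt_of_le (by omega : n ≤ k) with heq2 | hlt2
        · subst heq2
          simp only [Nat.choose_self, Nat.choose_eq_zero_of_lt (by omega : n < n + 1),
            Nat.choose_eq_zero_of_lt (by omega : n < n + 2),
            Nat.choose_succ_self_right, Finset.Ico_self, Finset.prod_empty,
            show Finset.Ico (n+1) n = ∅ from Finset.Ico_eq_empty (by omega),
            show Finset.Ico (n+2) n = ∅ from Finset.Ico_eq_empty (by omega)]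
          push_cast
          ring
        · simp only [Nat.choose_eq_zero_of_lt (by omega : n < k),
            Nat.choose_eq_zero_of_lt (by omega : n < k + 1),
            Nat.choose_eq_zero_of_lt (by omega : n < k + 2),
            Nat.choose_eq_zero_of_lt (by omega : n + 1 < k + 1)]
          push_cast
          ring

namespace CHaux

variable {m : ℕ} {A : Type*} [NormedRing A] [NormedAlgebra ℝ A]

/-- the `i`-th coordinate projection, as a continuous linear map -/
noncomputable def projR (i : Fin m) : (Fin m → ℝ) →L[ℝ] ℝ :=
  ContinuousLinearMap.proj i

/-- the derivative of the squared norm, as a continuous linear map -/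
noncomputable def dS (x : Fin m → ℝ) : (Fin m → ℝ) →L[ℝ] ℝ :=
  ∑ i : Fin m, (x i • projR i + x i • projR i)

/-- derivative of the squared norm -/
lemma hasFDerivAt_sq_sum (x : Fin m → ℝ) :
    HasFDerivAt (fun y : Fin m → ℝ => ∑ i, y i * y i) (dS x) x := by
  unfold dS
  apply HasFDerivAt.fun_sum
  intro i _
  exact (projR i).hasFDerivAt.mul (projR i).hasFDerivAt

lemma deriv_sq_apply (x : Fin m → ℝ) (j : Fin m) :
    dS x (Pi.single j 1) = 2 * x j := by
  unfold dS
  simp only [ContinuousLinearMap.coe_sum', Finset.sum_apply, ContinuousLinearMap.add_apply,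
    ContinuousLinearMap.coe_smul', Pi.smul_apply, ContinuousLinearMap.proj_apply,
    Pi.single_apply, smul_eq_mul, mul_ite, mul_one, mul_zero, projR]
  rw [Finset.sum_add_distrib]
  simp [Finset.sum_ite_eq']
  ring

lemma hasFDerivAt_evalS (p : Polynomial ℝ) (x : Fin m → ℝ) :
    HasFDerivAt (fun y : Fin m → ℝ => p.eval (∑ i, y i * y i))
      (p.derivative.eval (∑ i, x i * x i) • dS x) x :=
  by have := (p.hasDerivAt (∑ i, x i * x i)).comp_hasFDerivAt x (hasFDerivAt_sq_sum x); exact this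

lemma fderiv_even (p : Polynomial ℝ) (c : A) (x : Fin m → ℝ) (j : Fin m) :
    fderiv ℝ (fun y : Fin m → ℝ => p.eval (∑ i, y i * y i) • c) x (Pi.single j 1)
      = (p.derivative.eval (∑ i, x i * x i) * (2 * x j)) • c := by
  rw [((hasFDerivAt_evalS p x).smul_const c).fderiv]
  rw [ContinuousLinearMap.smulRight_apply, ContinuousLinearMap.smul_apply, deriv_sq_apply,
    smul_eq_mul]

variable (e : Fin m → A)

/-- the linear embedding `x ↦ ∑ x i • e i` as a continuous linear map -/
noncomputable def Xlin : (Fin m → ℝ) →L[ℝ] A :=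
  ∑ i : Fin m, (ContinuousLinearMap.proj i).smulRight (e i)

lemma Xlin_apply (y : Fin m → ℝ) : Xlin e y = ∑ i, y i • e i := by
  simp [Xlin]

lemma Xlin_single (j : Fin m) : Xlin e (Pi.single j 1) = e j := by
  rw [Xlin_apply]
  simp [Pi.single_apply, ite_smul, Finset.sum_ite_eq']

lemma fderiv_odd (q : Polynomial ℝ) (x : Fin m → ℝ) (j : Fin m) :
    fderiv ℝ (fun y : Fin m → ℝ => q.eval (∑ i, y i * y i) • (∑ i, y i • e i)) x (Pi.single j 1)
      = (q.derivative.eval (∑ i, x i * x i) * (2 * x j)) • (∑ i, x i • e i)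
        + q.eval (∑ i, x i * x i) • e j := by
  have hf : HasFDerivAt (fun y : Fin m → ℝ => ∑ i, y i • e i) (Xlin e) x := by
    have h : (fun y : Fin m → ℝ => ∑ i, y i • e i) = ⇑(Xlin e) :=
      funext fun y => (Xlin_apply e y).symm
    rw [h]
    exact (Xlin e).hasFDerivAt
  rw [((hasFDerivAt_evalS q x).fun_smul hf).fderiv]
  rw [ContinuousLinearMap.add_apply, ContinuousLinearMap.smul_apply,
    ContinuousLinearMap.smulRight_apply, ContinuousLinearMap.smul_apply,
    Xlin_single, deriv_sq_apply, smul_eq_mul]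
  exact add_comm _ _

variable (he : ∀ j, e j ^ 2 = -1)
variable (hanti : ∀ j k, j ≠ k → e j * e k = -(e k * e j))

include he hanti in
lemma mul_self_X (x : Fin m → ℝ) :
    (∑ i, x i • e i) * (∑ i, x i • e i) = (-(∑ i, x i * x i)) • (1 : A) := by
  rw [Finset.sum_mul_sum]
  have hterm : ∀ i j : Fin m, (x i • e i) * (x j • e j) = (x i * x j) • (e i * e j) :=
    fun i j => smul_mul_smul_comm (x i) (e i) (x j) (e j)
  simp_rw [hterm]
  rw [← Finset.sum_product' Finset.univ Finset.univ (fun i j => (x i * x j) • (e i * e j))]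
  rw [← Finset.sum_filter_add_sum_filter_not (Finset.univ ×ˢ Finset.univ)
    (fun p => p.1 = p.2) (fun p => (x p.1 * x p.2) • (e p.1 * e p.2))]
  have hoff : ∑ p ∈ Finset.filter (fun p : Fin m × Fin m => ¬p.1 = p.2)
      (Finset.univ ×ˢ Finset.univ), (x p.1 * x p.2) • (e p.1 * e p.2) = 0 := by
    refine Finset.sum_involution (fun p _ => p.swap) (fun p hp => ?_) (fun p hp _ => ?_)
      (fun p hp => ?_) (fun p hp => Prod.swap_swap p)
    · have hne : p.1 ≠ p.2 := by
        simpa using (Finset.mem_filter.mp hp).2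
      rw [hanti _ _ hne]
      simp only [Prod.fst_swap, Prod.snd_swap, smul_neg]
      rw [mul_comm (x p.1)]
      exact neg_add_cancel _
    · have hne : p.1 ≠ p.2 := by
        simpa using (Finset.mem_filter.mp hp).2
      intro hcon
      exact hne (congrArg Prod.snd hcon ▸ rfl)
    · have hne : p.1 ≠ p.2 := by
        simpa using (Finset.mem_filter.mp hp).2
      simp [Finset.mem_filter, hne.symm]
  rw [hoff, add_zero]
  have hdiag : ∑ p ∈ Finset.filter (fun p : Fin m × Fin m => p.1 = p.2)
      (Finset.univ ×ˢ Finset.univ), (x p.1 * x p.2) • (e p.1 * e p.2)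
      = ∑ i : Fin m, (x i * x i) • (e i * e i) := by
    refine Finset.sum_nbij' (fun p => p.1) (fun a => (a, a)) (fun p _ => Finset.mem_univ _)
      (fun a _ => by simp) (fun p hp => ?_) (fun a _ => rfl) (fun p hp => ?_)
    · have h2 : p.1 = p.2 := by simpa using (Finset.mem_filter.mp hp).2
      exact Prod.ext rfl h2
    · have h2 : p.1 = p.2 := by simpa using (Finset.mem_filter.mp hp).2
      rw [← h2]
  rw [hdiag]
  have hsq : ∀ i : Fin m, e i * e i = -1 := fun i => by rw [← sq]; exact he i
  simp_rw [hsq]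
  rw [← Finset.sum_smul, smul_neg, ← neg_smul]

omit he hanti in
lemma dirac_even (p : Polynomial ℝ) (c : A) (x : Fin m → ℝ) :
    diracOp e (fun y => p.eval (∑ i, y i * y i) • c) x
      = (2 * p.derivative.eval (∑ i, x i * x i)) • ((∑ i, x i • e i) * c) := by
  unfold diracOp
  simp_rw [fderiv_even]
  rw [Finset.sum_mul, Finset.smul_sum]
  refine Finset.sum_congr rfl fun j _ => ?_
  rw [mul_smul_comm, smul_mul_assoc, smul_smul]
  congr 1
  ring

omit he hanti in
lemma dirac_odd (q : Polynomial ℝ) (x : Fin m → ℝ) :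
    diracOp e (fun y => q.eval (∑ i, y i * y i) • (∑ i, y i • e i)) x
      = (2 * q.derivative.eval (∑ i, x i * x i)) • ((∑ i, x i • e i) * (∑ i, x i • e i))
        + q.eval (∑ i, x i * x i) • (∑ j, e j * e j) := by
  unfold diracOp
  simp_rw [fderiv_odd, mul_add]
  rw [Finset.sum_add_distrib]
  congr 1
  · rw [Finset.sum_mul, Finset.smul_sum]
    refine Finset.sum_congr rfl fun j _ => ?_
    rw [mul_smul_comm, smul_mul_assoc, smul_smul]
    congr 1
    ring
  · rw [Finset.smul_sum]
    exact Finset.sum_congr rfl fun j _ => mul_smul_comm _ _ _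

-- stage 4 (to be appended inside namespace CHaux, after dirac lemmas)
open Polynomial in
include he hanti in
lemma step_odd (n : ℕ) (p : Polynomial ℝ)
    (h : cliffordHermite e (2*n) = fun x => p.eval (∑ i, x i * x i) • (1:A)) :
    cliffordHermite e (2*n+1)
      = fun x => (p - 2 * derivative p).eval (∑ i, x i * x i) • (∑ i, x i • e i) := by
  funext x
  show (∑ j, x j • e j) * cliffordHermite e (2*n) x
      - diracOp e (cliffordHermite e (2*n)) x = _
  rw [h, dirac_even e]
  rw [mul_one, mul_smul_comm, mul_one]
  rw [← sub_smul]
  congr 1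
  simp only [Polynomial.eval_sub, Polynomial.eval_mul, Polynomial.eval_ofNat]

open Polynomial in
include he hanti in
lemma step_even (n : ℕ) (q : Polynomial ℝ)
    (h : cliffordHermite e (2*n+1) = fun x => q.eval (∑ i, x i * x i) • (∑ i, x i • e i)) :
    cliffordHermite e (2*n+1+1)
      = fun x => ((C (m:ℝ) - X) * q + 2 * X * derivative q).eval (∑ i, x i * x i) • (1:A) := by
  funext x
  show (∑ j, x j • e j) * cliffordHermite e (2*n+1) x
      - diracOp e (cliffordHermite e (2*n+1)) x = _
  rw [h, dirac_odd e, mul_self_X e he hanti, mul_smul_comm, mul_self_X e he hanti]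
  have hsq : ∀ j : Fin m, e j * e j = -1 := fun j => by rw [← sq]; exact he j
  simp_rw [hsq]
  rw [Finset.sum_const, Finset.card_univ, Fintype.card_fin,
    ← Nat.cast_smul_eq_nsmul ℝ m (-1 : A)]
  rw [smul_smul, smul_smul, smul_smul]
  rw [smul_neg, sub_add_eq_sub_sub, sub_neg_eq_add, ← sub_smul, ← add_smul]
  congr 1
  simp only [Polynomial.eval_add, Polynomial.eval_mul, Polynomial.eval_sub,
    Polynomial.eval_ofNat, Polynomial.eval_C, Polynomial.eval_X]
  ring

include he hanti in
lemma struct : ∀ n : ℕ,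
    (cliffordHermite e (2*n) = fun x => (Ppoly (m:ℝ) n).eval (∑ i, x i * x i) • (1:A)) ∧
    (cliffordHermite e (2*n+1)
      = fun x => (Qpoly (m:ℝ) n).eval (∑ i, x i * x i) • (∑ i, x i • e i)) := by
  intro n
  induction n with
  | zero =>
    have h0 : cliffordHermite e (2*0)
        = fun x => (Ppoly (m:ℝ) 0).eval (∑ i, x i * x i) • (1:A) := by
      funext x
      show (1 : A) = _
      simp [Ppoly]
    exact ⟨h0, step_odd e he hanti 0 _ h0⟩
  | succ n IH =>
    have hev : cliffordHermite e (2*(n+1))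
        = fun x => (Ppoly (m:ℝ) (n+1)).eval (∑ i, x i * x i) • (1:A) := by
      have h2 : 2*(n+1) = 2*n+1+1 := by ring
      rw [h2, Ppoly_succ]
      exact step_even e he hanti n _ IH.2
    refine ⟨hev, ?_⟩
    have := step_odd e he hanti (n+1) _ hev
    rw [this]
    rfl

end CHaux

lemma hermiteC_eq (m n : ℕ) :
    hermiteC m n n = ∏ l ∈ Finset.range n, ((m : ℝ) + 2 * l) := by
  unfold hermiteC
  refine Finset.prod_nbij' (fun a => n - a) (fun b => n - b) ?_ ?_ ?_ ?_ ?_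
  · intro a ha
    simp only [Finset.mem_Icc] at ha
    simp only [Finset.mem_range]
    omega
  · intro b hb
    simp only [Finset.mem_range] at hb
    simp only [Finset.mem_Icc]
    omega
  · intro a ha
    simp only [Finset.mem_Icc] at ha
    omega
  · intro b hb
    simp only [Finset.mem_range] at hb
    omega
  · intro a ha
    simp only [Finset.mem_Icc] at ha
    rw [Nat.cast_sub (by omega : a ≤ n)]

/-- values of the generalized Hermite polynomials at the origin:
`H_{2n}(0) = c_n(n) = m(m+2)⋯(m+2(n-1))` (as a scalar) and `H_{2n+1}(0) = 0`. -/
theorem cliffordHermite_at_zero {m : ℕ} {A : Type*} [NormedRing A] [NormedAlgebra ℝ A]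
    (e : Fin m → A)
    (he : ∀ j, e j ^ 2 = -1)
    (hanti : ∀ j k, j ≠ k → e j * e k = -(e k * e j))
    (n : ℕ) :
    cliffordHermite e (2 * n) 0 = (hermiteC m n n) • (1 : A) ∧
    hermiteC m n n = ∏ l ∈ Finset.range n, ((m : ℝ) + 2 * l) ∧
    cliffordHermite e (2 * n + 1) 0 = 0 := by
  obtain ⟨hev, hodd⟩ := CHaux.struct e he hanti n
  have hS : (∑ i : Fin m, (0 : Fin m → ℝ) i * (0 : Fin m → ℝ) i) = 0 := by simp
  refine ⟨?_, hermiteC_eq m n, ?_⟩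
  · rw [hev]
    simp only [hS]
    rw [← Polynomial.coeff_zero_eq_eval_zero, Ppoly_coeff]
    rw [hermiteC_eq m n]
    simp only [pow_zero, Nat.choose_zero_right, Nat.cast_one, one_mul]
    rw [← Finset.range_eq_Ico]
  · rw [hodd]
    simp
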